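/- Let X be a finite set and let A be an abelian 2-orbit-closed subgroup of Sym(X). Then for every orbit O of A: O is isolated if and only if the factor group A_O/A_O^* is an elementary abelian 2-group (equivalently, the restriction to O of a² lies in A_O^* for every a ∈ A). -/

import Mathlib

/-- The orbit of a point `x` under a set `G` of permutations of `X`. -/
def orbitOf {X : Type*} (G : Set (Equiv.Perm X)) (x : X) : Set X :=
  {y | ∃ a ∈ G, a x = y}

/-- A permutation `σ` is 2-orbit-compatible with `G` if for every pair of orbits
`O` and `Q` of `G` there is an element of `G` agreeing with `σ` on `O ∪ Q`. -/
def TwoOrbitCompatible {X : Type*} (G : Set (Equiv.Perm X)) (σ : Equiv.Perm X) : Prop :=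
  ∀ x y : X, ∃ a ∈ G, ∀ z ∈ orbitOf G x ∪ orbitOf G y, σ z = a z

/-- A subgroup `A ≤ Sym(X)` is 2-orbit-closed if every permutation that is
2-orbit-compatible with `A` belongs to `A`. -/
def TwoOrbitClosed {X : Type*} (A : Subgroup (Equiv.Perm X)) : Prop :=
  ∀ σ : Equiv.Perm X, TwoOrbitCompatible (A : Set (Equiv.Perm X)) σ → σ ∈ A

/-- The factor group `A_O / A_O^*` is an elementary abelian 2-group: for every `a ∈ A`,
the restriction of `a²` to `O` is the restriction of some element of `A` that fixes
every point outside `O`. -/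
def FactorIsElem2 {X : Type*} (A : Subgroup (Equiv.Perm X)) (O : Set X) : Prop :=
  ∀ a ∈ A, ∃ b ∈ A, (∀ z ∈ O, b z = a (a z)) ∧ ∀ z ∉ O, b z = z

/-- An orbit `O` is isolated with respect to `G` if for every orbit `Q ≠ O` the factor
group `G_O / G_O^Q` is an elementary abelian 2-group, i.e. `O` is adjacent to no other
orbit: for every `a ∈ G`, the restriction of `a²` to `O` is the restriction of some
element of `G` fixing `Q` pointwise. -/
def IsolatedWrt {X : Type*} (G : Set (Equiv.Perm X)) (O : Set X) : Prop :=
  ∀ y : X, orbitOf G y ≠ O →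
    ∀ a ∈ G, ∃ b ∈ G, (∀ z ∈ O, b z = a (a z)) ∧ ∀ z ∈ orbitOf G y, b z = z


lemma orbit_closure {X : Type*} (A : Subgroup (Equiv.Perm X)) {a : Equiv.Perm X} (ha : a ∈ A)
    {x z : X} (hz : z ∈ orbitOf (A : Set (Equiv.Perm X)) x) :
    a z ∈ orbitOf (A : Set (Equiv.Perm X)) x := by
  obtain ⟨c, hc, hcz⟩ := hz
  exact ⟨a * c, A.mul_mem ha hc, by simp [Equiv.Perm.mul_apply, hcz]⟩

lemma mem_orbit_self {X : Type*} (A : Subgroup (Equiv.Perm X)) (x : X) :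
    x ∈ orbitOf (A : Set (Equiv.Perm X)) x :=
  ⟨1, A.one_mem, rfl⟩

lemma orbit_eq {X : Type*} (A : Subgroup (Equiv.Perm X)) {x z : X}
    (hz : z ∈ orbitOf (A : Set (Equiv.Perm X)) x) :
    orbitOf (A : Set (Equiv.Perm X)) z = orbitOf (A : Set (Equiv.Perm X)) x := by
  obtain ⟨c, hc, hcz⟩ := hz
  ext w
  constructor
  · rintro ⟨b, hb, rfl⟩
    exact ⟨b * c, A.mul_mem hb hc, by simp [Equiv.Perm.mul_apply, hcz]⟩
  · rintro ⟨b, hb, rfl⟩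
    refine ⟨b * c⁻¹, A.mul_mem hb (A.inv_mem hc), ?_⟩
    simp [Equiv.Perm.mul_apply, ← hcz]

lemma orbit_disjoint {X : Type*} (A : Subgroup (Equiv.Perm X)) {x y z : X}
    (hne : orbitOf (A : Set (Equiv.Perm X)) y ≠ orbitOf (A : Set (Equiv.Perm X)) x)
    (hz : z ∈ orbitOf (A : Set (Equiv.Perm X)) y) :
    z ∉ orbitOf (A : Set (Equiv.Perm X)) x := fun hz' =>
  hne ((orbit_eq A hz).symm.trans (orbit_eq A hz'))

theorem statement10 (X : Type*) [Fintype X] (A : Subgroup (Equiv.Perm X))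
    (hab : ∀ a ∈ A, ∀ b ∈ A, a * b = b * a) (hclosed : TwoOrbitClosed A) (x : X) :
    IsolatedWrt (A : Set (Equiv.Perm X)) (orbitOf (A : Set (Equiv.Perm X)) x) ↔
      FactorIsElem2 A (orbitOf (A : Set (Equiv.Perm X)) x) := by
  classical
  set O := orbitOf (A : Set (Equiv.Perm X)) x with hO
  constructor
  · intro hI a ha
    -- build σ : a² on O, identity elsewhere
    have haO : ∀ z ∈ O, a (a z) ∈ O := fun z hz =>
      orbit_closure A ha (orbit_closure A ha hz)
    have haO' : ∀ z ∈ O, a⁻¹ (a⁻¹ z) ∈ O := fun z hz =>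
      orbit_closure A (A.inv_mem ha) (orbit_closure A (A.inv_mem ha) hz)
    let σ : Equiv.Perm X :=
      { toFun := fun z => if z ∈ O then a (a z) else z
        invFun := fun z => if z ∈ O then a⁻¹ (a⁻¹ z) else z
        left_inv := by
          intro z
          by_cases hz : z ∈ O
          · simp [if_pos hz, if_pos (haO z hz)]
          · simp [if_neg hz]
        right_inv := by
          intro z
          by_cases hz : z ∈ O
          · simp [if_pos hz, if_pos (haO' z hz)]; exact fun h => (h (haO' z hz)).elim
          · simp [if_neg hz] }
    have hσmem : σ ∈ A := by
      apply hclosed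
      intro y1 y2
      by_cases h1 : orbitOf (A : Set (Equiv.Perm X)) y1 = O
      · by_cases h2 : orbitOf (A : Set (Equiv.Perm X)) y2 = O
        · refine ⟨a * a, A.mul_mem ha ha, ?_⟩
          rintro z (hz | hz)
          · rw [h1] at hz
            show (if z ∈ O then a (a z) else z) = _
            simp [if_pos hz, Equiv.Perm.mul_apply]
          · rw [h2] at hz
            show (if z ∈ O then a (a z) else z) = _
            simp [if_pos hz, Equiv.Perm.mul_apply]
        · obtain ⟨b, hb, hbO, hbQ⟩ := hI y2 h2 a ha
          refine ⟨b, hb, ?_⟩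
          rintro z (hz | hz)
          · rw [h1] at hz
            show (if z ∈ O then a (a z) else z) = _
            rw [if_pos hz, hbO z hz]
          · have hzO : z ∉ O := orbit_disjoint A h2 hz
            show (if z ∈ O then a (a z) else z) = _
            rw [if_neg hzO, hbQ z hz]
      · by_cases h2 : orbitOf (A : Set (Equiv.Perm X)) y2 = O
        · obtain ⟨b, hb, hbO, hbQ⟩ := hI y1 h1 a ha
          refine ⟨b, hb, ?_⟩
          rintro z (hz | hz)
          · have hzO : z ∉ O := orbit_disjoint A h1 hz
            show (if z ∈ O then a (a z) else z) = _
            rw [if_neg hzO, hbQ z hz]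
          · rw [h2] at hz
            show (if z ∈ O then a (a z) else z) = _
            rw [if_pos hz, hbO z hz]
        · refine ⟨1, A.one_mem, ?_⟩
          rintro z (hz | hz)
          · have hzO : z ∉ O := orbit_disjoint A h1 hz
            show (if z ∈ O then a (a z) else z) = _
            simp [if_neg hzO]
          · have hzO : z ∉ O := orbit_disjoint A h2 hz
            show (if z ∈ O then a (a z) else z) = _
            simp [if_neg hzO]
    refine ⟨σ, hσmem, ?_, ?_⟩
    · intro z hz
      show (if z ∈ O then a (a z) else z) = _
      rw [if_pos hz]
    · intro z hz
      show (if z ∈ O then a (a z) else z) = _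
      rw [if_neg hz]
  · intro hF y hy a ha
    obtain ⟨b, hb, hbO, hbout⟩ := hF a ha
    refine ⟨b, hb, hbO, ?_⟩
    intro z hz
    exact hbout z (orbit_disjoint A hy hz)
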